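/- The MinT-reconciled forecast based on the empirical covariance can be written as S G ŷ = S (ŷ^{bot} + Ψ' (ŷ^{top} − C ŷ^{bot})), where Ψ = (Z'Z)^{-1} Z' E^{bot} is the OLS coefficient matrix of regressing historical bottom-level forecast errors on historical incoherencies; consequently S⊥' (S G ŷ) = 0 for every ŷ. -/

import Mathlib

open Matrix

/-- The empirical MinT reconciled forecast can be written as
`S G ŷ = S (ŷᵇᵒᵗ + Ψᵀ (ŷᵗᵒᵖ − C ŷᵇᵒᵗ))` where `Ψ = (ZᵀZ)⁻¹ Zᵀ Eᵇᵒᵗ` is the OLS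
coefficient matrix of regressing historical bottom-level forecast errors on
historical incoherencies; consequently `S⊥ᵀ (S G ŷ) = 0` for every `ŷ`. -/
theorem mint_sample_reconciled_form {T q n : ℕ}
    (C : Matrix (Fin q) (Fin n) ℝ)
    (S : Matrix (Fin q ⊕ Fin n) (Fin n) ℝ) (hS : S = Matrix.fromRows C 1)
    (J : Matrix (Fin n) (Fin q ⊕ Fin n) ℝ) (hJ : J = Matrix.fromCols 0 1)
    (Sperp : Matrix (Fin q ⊕ Fin n) (Fin q) ℝ)
    (hSperp : Sperpᵀ = Matrix.fromCols 1 (-C))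
    (Z : Matrix (Fin T) (Fin q) ℝ) (hZinv : IsUnit (Zᵀ * Z).det)
    (Ebot : Matrix (Fin T) (Fin n) ℝ)
    (Ψ : Matrix (Fin q) (Fin n) ℝ) (hΨ : Ψ = (Zᵀ * Z)⁻¹ * Zᵀ * Ebot)
    (G : Matrix (Fin n) (Fin q ⊕ Fin n) ℝ)
    (hG : G = J + Ebotᵀ * Z * (Zᵀ * Z)⁻¹ * Sperpᵀ) :
    ∀ yhat : Fin q ⊕ Fin n → ℝ,
      (S * G).mulVec yhat =
        S.mulVec ((fun i => yhat (Sum.inr i)) +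
          Ψᵀ.mulVec
            (fun i => yhat (Sum.inl i) - C.mulVec (fun j => yhat (Sum.inr j)) i)) ∧
      Sperpᵀ.mulVec ((S * G).mulVec yhat) = 0 := by
  have hΨT : Ψᵀ = Ebotᵀ * Z * (Zᵀ * Z)⁻¹ := by
    rw [hΨ]
    simp [transpose_mul, transpose_nonsing_inv, Matrix.mul_assoc]
  have hG' : G = J + Ψᵀ * Sperpᵀ := by rw [hG, hΨT]
  have hperpS : Sperpᵀ * S = 0 := by
    rw [hSperp, hS, fromCols_mul_fromRows]
    simp
  intro yhat
  have hy : yhat = Sum.elim (fun i => yhat (Sum.inl i)) (fun i => yhat (Sum.inr i)) := by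
    funext i; cases i <;> rfl
  have hGy : G.mulVec yhat = (fun i => yhat (Sum.inr i)) +
      Ψᵀ.mulVec
        (fun i => yhat (Sum.inl i) - C.mulVec (fun j => yhat (Sum.inr j)) i) := by
    rw [hG', add_mulVec, hJ]
    congr 1
    · rw [hy, fromCols_mulVec_sumElim]
      simp
    · have harg : (fun i => yhat (Sum.inl i) - C.mulVec (fun j => yhat (Sum.inr j)) i) =
          (fun i => yhat (Sum.inl i)) + -(C.mulVec fun j => yhat (Sum.inr j)) := by
        funext i; simp [sub_eq_add_neg]
      rw [harg, ← mulVec_mulVec, hSperp]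
      congr 1
      rw [hy, fromCols_mulVec_sumElim]
      simp [neg_mulVec]
  refine ⟨?_, ?_⟩
  · rw [← mulVec_mulVec, hGy]
  · rw [← mulVec_mulVec, mulVec_mulVec, hperpS]
    simp
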